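/- arXiv:2001.01201 — 3 statements merged into one kernel-verified Lean document; each statement's English description precedes it below -/
import Mathlib

section
/- Let T₀ > 0, β ∈ [0,1], a > 0 and n ∈ ℕ. Let X = (X₁,…,Xₙ) be a random vector whose coordinates are i.i.d. uniform on {−a, a}. Then for every f ∈ ℝ, the expected energy spectral density of the pulse-amplitude-modulated signal satisfies E[ |𝓕(∑_{i=1}^n Xᵢ·gᵢ)(f)|² ] = a²·n·|𝓕φ(f)|², where gᵢ(t) = φ(t − (i − 1/2)·T₀). -/
open MeasureTheory
open scoped FourierTransform ENNReal

/-- The root raised cosine (RRC) pulse with duration `T0` and roll-off factor `β`. -/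
noncomputable def rrc (T0 β : ℝ) : ℝ → ℝ := fun t =>
  if |t| ≤ ((1 - β) / (1 + β)) * (T0 / 2) then Real.sqrt ((1 + β) / T0)
  else if |t| ≤ T0 / 2 then
    Real.sqrt ((1 + Real.cos ((Real.pi * (1 + β) / (T0 * β)) *
      (|t| - ((1 - β) / (1 + β)) * (T0 / 2)))) * (1 + β) / (2 * T0))
  else 0

/-- The uniform distribution on the two-point set `{-a, a}`. -/
noncomputable def twoPoint (a : ℝ) : Measure ℝ :=
  (1 / 2 : ℝ≥0∞) • Measure.dirac (-a) + (1 / 2 : ℝ≥0∞) • Measure.dirac a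

/-! ### Auxiliary lemmas about `rrc` -/

lemma rrc_meas (T0 β : ℝ) : Measurable (rrc T0 β) := by
  unfold rrc
  apply Measurable.ite
  · exact measurableSet_le (by fun_prop) measurable_const
  · fun_prop
  · apply Measurable.ite
    · exact measurableSet_le (by fun_prop) measurable_const
    · fun_prop
    · fun_prop

lemma rrc_bound (T0 β : ℝ) (hT0 : 0 < T0) (hβ0 : 0 ≤ β) (t : ℝ) :
    |rrc T0 β t| ≤ Real.sqrt ((1 + β) / T0) := by
  unfold rrc
  have h1 : (0:ℝ) ≤ (1 + β) / T0 := by positivity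
  split_ifs with h2 h3
  · rw [abs_of_nonneg (Real.sqrt_nonneg _)]
  · rw [abs_of_nonneg (Real.sqrt_nonneg _)]
    apply Real.sqrt_le_sqrt
    rw [div_le_div_iff₀ (by positivity) hT0]
    have hc := Real.cos_le_one ((Real.pi * (1 + β) / (T0 * β)) *
      (|t| - ((1 - β) / (1 + β)) * (T0 / 2)))
    nlinarith [mul_nonneg (sub_nonneg.2 hc) (mul_nonneg (by linarith : (0:ℝ) ≤ 1+β) hT0.le)]
  · simpa using Real.sqrt_nonneg ((1+β)/T0)

lemma rrc_support (T0 β : ℝ) (hT0 : 0 < T0) (hβ0 : 0 ≤ β) (hβ1 : β ≤ 1) (t : ℝ)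
    (ht : ¬ |t| ≤ T0/2) : rrc T0 β t = 0 := by
  unfold rrc
  rw [if_neg, if_neg ht]
  intro h
  apply ht
  refine h.trans ?_
  have : (1 - β) / (1 + β) ≤ 1 := by
    rw [div_le_one (by linarith)]; linarith
  nlinarith

lemma rrc_integrable (T0 β : ℝ) (hT0 : 0 < T0) (hβ0 : 0 ≤ β) (hβ1 : β ≤ 1) :
    Integrable (rrc T0 β) := by
  have heq : rrc T0 β = (Set.Icc (-(T0/2)) (T0/2)).indicator (rrc T0 β) := by
    ext t
    rw [Set.indicator_apply]
    split_ifs with h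
    · rfl
    · exact rrc_support T0 β hT0 hβ0 hβ1 t (by simp only [Set.mem_Icc, abs_le] at *; tauto)
  rw [heq, integrable_indicator_iff measurableSet_Icc]
  apply Measure.integrableOn_of_bounded (M := Real.sqrt ((1+β)/T0))
  · exact ((measure_Icc_lt_top).ne)
  · exact (rrc_meas T0 β).aestronglyMeasurable
  · filter_upwards with t using by
      simpa [Real.norm_eq_abs] using rrc_bound T0 β hT0 hβ0 t

/-! ### Auxiliary lemmas about `twoPoint` -/

instance (a : ℝ) : IsProbabilityMeasure (twoPoint a) := by
  constructor
  simp [twoPoint]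
  rw [ENNReal.inv_two_add_inv_two]

lemma integrable_dirac'' {f : ℝ → ℝ} (hf : Measurable f) (a : ℝ) :
    Integrable f (Measure.dirac a) := by
  refine ⟨hf.aestronglyMeasurable, ?_⟩
  rw [HasFiniteIntegral]
  rw [lintegral_dirac' a (by fun_prop : Measurable fun x => (‖f x‖ₑ : ENNReal))]
  exact enorm_lt_top

lemma twoPoint_integral (a : ℝ) (g : ℝ → ℝ) (hg : Measurable g) :
    ∫ y, g y ∂(twoPoint a) = (g (-a) + g a) / 2 := by
  unfold twoPoint
  rw [integral_add_measure, integral_smul_measure, integral_smul_measure,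
    integral_dirac' _ _ hg.stronglyMeasurable, integral_dirac' _ _ hg.stronglyMeasurable]
  · simp only [ENNReal.toReal_div, ENNReal.toReal_one, ENNReal.toReal_ofNat, smul_eq_mul]
    ring
  · exact (integrable_dirac'' hg _).smul_measure (by simp)
  · exact (integrable_dirac'' hg _).smul_measure (by simp)

lemma twoPoint_integrable (a : ℝ) (g : ℝ → ℝ) (hg : Measurable g) :
    Integrable g (twoPoint a) := by
  unfold twoPoint
  exact ((integrable_dirac'' hg _).smul_measure (by simp)).add_measure
    ((integrable_dirac'' hg _).smul_measure (by simp))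

/-- Type synonym of `ℝ` carrying the `twoPoint a` measure as its volume. -/
def TP (_a : ℝ) : Type := ℝ

instance (a : ℝ) : MeasurableSpace (TP a) := inferInstanceAs (MeasurableSpace ℝ)
noncomputable instance (a : ℝ) : MeasureSpace (TP a) := ⟨twoPoint a⟩
instance (a : ℝ) : IsProbabilityMeasure (volume : Measure (TP a)) :=
  inferInstanceAs (IsProbabilityMeasure (twoPoint a))
instance (a : ℝ) : SigmaFinite (volume : Measure (TP a)) := by infer_instance

/-- The helper coordinatewise factors for the pair expectation. -/
noncomputable def pairG {n : ℕ} (i j : Fin n) : Fin n → ℝ → ℝ :=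
  fun k y => (if k = i then y else 1) * (if k = j then y else 1)

lemma pairG_meas {n : ℕ} (i j k : Fin n) : Measurable (pairG i j k) := by
  unfold pairG
  apply Measurable.mul <;> (split_ifs <;> fun_prop)

lemma pairG_prod {n : ℕ} (i j : Fin n) (x : Fin n → ℝ) :
    x i * x j = ∏ k, pairG i j k (x k) := by
  unfold pairG
  rw [Finset.prod_mul_distrib]
  simp

lemma twoPoint_pair_integrable (a : ℝ) {n : ℕ} (i j : Fin n) :
    Integrable (fun x : Fin n → ℝ => x i * x j)
      (Measure.pi fun _ : Fin n => twoPoint a) := by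
  have h : Integrable (fun x : Fin n → TP a => ∏ k, pairG i j k (x k)) :=
    Integrable.fintype_prod (f := fun k (y : TP a) => pairG i j k y)
      (fun k => twoPoint_integrable a (pairG i j k) (pairG_meas i j k))
  have heq : (fun x : Fin n → ℝ => x i * x j)
      = fun x : Fin n → ℝ => ∏ k, pairG i j k (x k) := funext (pairG_prod i j)
  rw [heq]
  exact h

lemma twoPoint_pair_integral (a : ℝ) {n : ℕ} (i j : Fin n) :
    ∫ x : Fin n → ℝ, x i * x j ∂(Measure.pi fun _ : Fin n => twoPoint a)
      = if i = j then a ^ 2 else 0 := by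
  have heq : (fun x : Fin n → ℝ => x i * x j)
      = fun x : Fin n → ℝ => ∏ k, pairG i j k (x k) := funext (pairG_prod i j)
  rw [heq]
  have h2 : ∫ x : Fin n → ℝ, ∏ k, pairG i j k (x k)
        ∂(Measure.pi fun _ : Fin n => twoPoint a)
      = ∏ k, ∫ y, pairG i j k y ∂(twoPoint a) :=
    integral_fintype_prod_eq_prod (𝕜 := ℝ) (ι := Fin n) (fun k (y : ℝ) => pairG i j k y)
  rw [h2]
  by_cases hij : i = j
  · subst hij
    have hval : ∀ k, ∫ y, pairG i i k y ∂(twoPoint a) = if k = i then a ^ 2 else 1 := by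
      intro k
      rw [twoPoint_integral a _ (pairG_meas i i k)]
      unfold pairG
      split_ifs <;> ring
    simp only [hval]
    simp
  · rw [if_neg hij]
    apply Finset.prod_eq_zero (Finset.mem_univ i)
    rw [twoPoint_integral a _ (pairG_meas i j i)]
    unfold pairG
    simp [hij]

/-! ### Fourier lemmas -/

lemma fourier_shift (g : ℝ → ℂ) (τ f : ℝ) :
    𝓕 (fun t => g (t - τ)) f = (Real.fourierChar (-(τ * f)) : ℂ) * 𝓕 g f := by
  have h0 : (fun t => g (t - τ)) = g ∘ (fun t => t + (-τ)) := by
    ext t; simp [sub_eq_add_neg]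
  rw [h0]
  have h := VectorFourier.fourierIntegral_comp_add_right (V := ℝ) (W := ℝ)
    Real.fourierChar volume (innerₗ ℝ) g (-τ)
  have h2 : 𝓕 (g ∘ fun v => v + (-τ)) f
      = Real.fourierChar ((innerₗ ℝ) (-τ) f) • 𝓕 g f :=
    congrFun h f
  rw [h2]
  simp [Circle.smul_def, real_inner_comm, mul_comm f τ]

lemma fourier_sum {n : ℕ} (g : Fin n → ℝ → ℂ) (hg : ∀ i, Integrable (g i)) (f : ℝ) :
    𝓕 (fun t => ∑ i, g i t) f = ∑ i, 𝓕 (g i) f := by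
  simp only [Real.fourier_eq]
  rw [← integral_finset_sum]
  · simp [Finset.smul_sum]
  · exact fun i _ => (Real.fourierIntegral_convergent_iff f).2 (hg i)

lemma fourier_const_mul (g : ℝ → ℂ) (r : ℂ) (f : ℝ) :
    𝓕 (fun t => r * g t) f = r * 𝓕 g f := by
  simp only [Real.fourier_eq, Circle.smul_def, smul_eq_mul]
  rw [← integral_const_mul]
  congr 1 with v
  ring

/-! ### Main theorem -/

/-- The expected energy spectral density of the PAM signal with i.i.d. BPSK symbols equals
`a² n |𝓕φ(f)|²`. -/
theorem expected_esd_pam (T0 β a : ℝ) (hT0 : 0 < T0) (hβ : β ∈ Set.Icc (0 : ℝ) 1)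
    (ha : 0 < a) (n : ℕ) (f : ℝ) :
    (∫ x : Fin n → ℝ,
        ‖𝓕 (fun t : ℝ => ∑ i : Fin n,
            (x i : ℂ) * (rrc T0 β (t - (((i : ℕ) : ℝ) + 1 - 1 / 2) * T0) : ℂ)) f‖ ^ 2
      ∂(Measure.pi fun _ : Fin n => twoPoint a))
    = a ^ 2 * n * ‖𝓕 (fun t : ℝ => (rrc T0 β t : ℂ)) f‖ ^ 2 := by
  obtain ⟨hβ0, hβ1⟩ := hβ
  set c : ℂ := 𝓕 (fun t : ℝ => (rrc T0 β t : ℂ)) f with hc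
  set τ : Fin n → ℝ := fun i => (((i : ℕ) : ℝ) + 1 - 1 / 2) * T0 with hτ
  set e : Fin n → ℂ := fun i => (Real.fourierChar (-(τ i * f)) : ℂ) with he
  have hrrcC : Integrable (fun t : ℝ => (rrc T0 β t : ℂ)) :=
    (rrc_integrable T0 β hT0 hβ0 hβ1).ofReal
  have hnorme : ∀ i, ‖e i‖ = 1 := fun i => by
    simp [he, Circle.norm_coe]
  -- Step A: value of the Fourier transform
  have hA : ∀ x : Fin n → ℝ,
      𝓕 (fun t : ℝ => ∑ i : Fin n, (x i : ℂ) * (rrc T0 β (t - τ i) : ℂ)) f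
        = (∑ i, (x i : ℂ) * e i) * c := by
    intro x
    have hint : ∀ i : Fin n,
        Integrable (fun t : ℝ => (x i : ℂ) * (rrc T0 β (t - τ i) : ℂ)) :=
      fun i => (hrrcC.comp_sub_right (τ i)).const_mul _
    rw [fourier_sum _ hint f, Finset.sum_mul]
    refine Finset.sum_congr rfl fun i _ => ?_
    rw [fourier_const_mul (fun t => (rrc T0 β (t - τ i) : ℂ)) _ f,
      fourier_shift (fun t => (rrc T0 β t : ℂ)) (τ i) f]
    simp [he, mul_assoc, hc]
  -- Step C: pointwise expansion of the squared norm
  have hC : ∀ x : Fin n → ℝ,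
      ‖∑ i, (x i : ℂ) * e i‖ ^ 2
        = ∑ i, ∑ j, (x i * x j) * (e i * (starRingEnd ℂ) (e j)).re := by
    intro x
    have hz : ∀ z : ℂ, ‖z‖ ^ 2 = (z * (starRingEnd ℂ) z).re := by
      intro z
      rw [Complex.mul_conj, Complex.ofReal_re, Complex.sq_norm]
    rw [hz, map_sum, Finset.sum_mul_sum, Complex.re_sum]
    refine Finset.sum_congr rfl fun i _ => ?_
    rw [Complex.re_sum]
    refine Finset.sum_congr rfl fun j _ => ?_
    have : (x i : ℂ) * e i * ((starRingEnd ℂ) ((x j : ℂ) * e j))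
        = ((x i * x j : ℝ) : ℂ) * (e i * (starRingEnd ℂ) (e j)) := by
      rw [map_mul, Complex.conj_ofReal]
      push_cast
      ring
    rw [this, Complex.re_ofReal_mul]
  -- combine
  have hpt : ∀ x : Fin n → ℝ,
      ‖𝓕 (fun t : ℝ => ∑ i : Fin n,
          (x i : ℂ) * (rrc T0 β (t - (((i : ℕ) : ℝ) + 1 - 1 / 2) * T0) : ℂ)) f‖ ^ 2
        = (∑ i, ∑ j, (x i * x j) * (e i * (starRingEnd ℂ) (e j)).re) * ‖c‖ ^ 2 := by
    intro x
    have : (fun t : ℝ => ∑ i : Fin n,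
        (x i : ℂ) * (rrc T0 β (t - (((i : ℕ) : ℝ) + 1 - 1 / 2) * T0) : ℂ))
        = fun t : ℝ => ∑ i : Fin n, (x i : ℂ) * (rrc T0 β (t - τ i) : ℂ) := by
      simp [hτ]
    rw [this, hA x, norm_mul, mul_pow, hC x]
  rw [integral_congr_ae (Filter.Eventually.of_forall hpt)]
  rw [integral_mul_const]
  have hIij : ∀ i j : Fin n, Integrable
      (fun x : Fin n → ℝ => (x i * x j) * (e i * (starRingEnd ℂ) (e j)).re)
      (Measure.pi fun _ : Fin n => twoPoint a) :=
    fun i j => (twoPoint_pair_integrable a i j).mul_const _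
  rw [integral_finset_sum _ (fun i _ => integrable_finset_sum _ (fun j _ => hIij i j))]
  have hsum : ∀ i : Fin n,
      (∫ x : Fin n → ℝ, ∑ j, (x i * x j) * (e i * (starRingEnd ℂ) (e j)).re
        ∂(Measure.pi fun _ : Fin n => twoPoint a)) = a ^ 2 := by
    intro i
    rw [integral_finset_sum _ (fun j _ => hIij i j)]
    have hterm : ∀ j : Fin n,
        (∫ x : Fin n → ℝ, (x i * x j) * (e i * (starRingEnd ℂ) (e j)).re
          ∂(Measure.pi fun _ : Fin n => twoPoint a))
          = if i = j then a ^ 2 * (e i * (starRingEnd ℂ) (e j)).re else 0 := by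
      intro j
      rw [integral_mul_const, twoPoint_pair_integral a i j]
      split_ifs <;> simp
    simp only [hterm]
    rw [Finset.sum_ite_eq]
    have : (e i * (starRingEnd ℂ) (e i)).re = 1 := by
      rw [Complex.mul_conj, Complex.ofReal_re, Complex.normSq_eq_norm_sq,
        hnorme i]
      norm_num
    simp [this]
  simp only [hsum]
  rw [Finset.sum_const, Finset.card_univ, Fintype.card_fin]
  push_cast
  ring
end

section
/- For every T₀ > 0 and every β ∈ [0,1], the root raised cosine pulse has unit energy: ∫_ℝ φ(t)² dt = 1. -/
open MeasureTheory

/-- The root raised cosine pulse has unit energy. -/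
theorem rrc_unit_energy (T0 β : ℝ) (hT0 : 0 < T0) (hβ : β ∈ Set.Icc (0 : ℝ) 1) :
    ∫ t : ℝ, (rrc T0 β t) ^ 2 = 1 := by
  obtain ⟨hβ0, hβ1⟩ := hβ
  have h1β : (0:ℝ) < 1 + β := by linarith
  set a : ℝ := ((1 - β) / (1 + β)) * (T0 / 2) with ha
  set b : ℝ := T0 / 2 with hb
  set k : ℝ := Real.pi * (1 + β) / (T0 * β) with hk
  have hbpos : 0 < b := by positivity
  have ha0 : 0 ≤ a :=
    mul_nonneg (div_nonneg (by linarith) h1β.le) (by positivity)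
  have hab : a ≤ b := by
    have h : (1 - β) / (1 + β) ≤ 1 := by
      rw [div_le_one h1β]; linarith
    calc a ≤ 1 * (T0 / 2) := mul_le_mul_of_nonneg_right h (by positivity)
    _ = b := by rw [one_mul]
  set g : ℝ → ℝ := fun t =>
      if |t| ≤ a then (1 + β) / T0
      else if |t| ≤ b then
        (1 + Real.cos (k * (|t| - a))) * (1 + β) / (2 * T0)
      else 0 with hg
  have hsq : ∀ t, rrc T0 β t ^ 2 = g t := by
    intro t
    have hcos := Real.neg_one_le_cos (k * (|t| - a))
    simp only [hg, rrc, ← hb, ← ha, ← hk]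
    split_ifs with h1 h2
    · exact Real.sq_sqrt (by positivity)
    · exact Real.sq_sqrt (div_nonneg (mul_nonneg (by linarith) h1β.le) (by linarith))
    · ring
  simp only [hsq]
  have hcompl : ∀ t ∉ Set.Icc (-b) b, g t = 0 := by
    intro t ht
    rw [Set.mem_Icc, not_and_or] at ht
    have hbt : b < |t| := by
      rcases ht with h | h <;> push_neg at h <;> cases abs_cases t <;> linarith
    simp only [hg]
    rw [if_neg (by linarith), if_neg (by linarith)]
  rw [← setIntegral_eq_integral_of_forall_compl_eq_zero hcompl,
    integral_Icc_eq_integral_Ioc, ← intervalIntegral.integral_of_le (by linarith : -b ≤ b)]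
  have hmeas : Measurable g := by
    apply Measurable.ite (measurableSet_le (by fun_prop) measurable_const) measurable_const
    exact Measurable.ite (measurableSet_le (by fun_prop) measurable_const)
      (by fun_prop) measurable_const
  have hint : ∀ u v : ℝ, IntervalIntegrable g volume u v := by
    intro u v
    have hbd : ∀ s : Set ℝ, ∀ᵐ t ∂(volume.restrict s), ‖g t‖ ≤ (1 + β) / T0 := by
      intro s
      filter_upwards with t
      have hcos1 := Real.neg_one_le_cos (k * (|t| - a))
      have hcos2 := Real.cos_le_one (k * (|t| - a))
      have h0 : 0 ≤ g t := by
        simp only [hg]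
        split_ifs with h1 h2
        · positivity
        · have hh : 0 ≤ (1 + Real.cos (k * (|t| - a))) * (1 + β) := by nlinarith
          positivity
        · exact le_rfl
      have hM : (0:ℝ) ≤ (1 + β) / T0 := by positivity
      rw [Real.norm_eq_abs, abs_le]
      refine ⟨by linarith, ?_⟩
      simp only [hg]
      split_ifs with h1 h2
      · exact le_rfl
      · rw [div_le_div_iff₀ (by linarith) hT0]
        have key : 0 ≤ (1 - Real.cos (k * (|t| - a))) * (1 + β) * T0 :=
          mul_nonneg (mul_nonneg (by linarith) h1β.le) hT0.le
        nlinarith [key]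
      · exact hM
    constructor <;>
      exact Measure.integrableOn_of_bounded measure_Ioc_lt_top.ne
        hmeas.aestronglyMeasurable (hbd _)
  have hmid : ∫ t in (-a)..a, g t = 1 - β := by
    rw [intervalIntegral.integral_congr (g := fun _ => (1 + β) / T0)
      (fun t ht => by
        rw [Set.uIcc_of_le (by linarith)] at ht
        have habs : |t| ≤ a := abs_le.2 ⟨ht.1, ht.2⟩
        simp only [hg, if_pos habs])]
    rw [intervalIntegral.integral_const, smul_eq_mul, ha, hb]
    field_simp
    ring
  have hright : ∫ t in a..b, g t = β / 2 := by
    rcases eq_or_lt_of_le hβ0 with hβz | hβpos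
    · have hab' : a = b := by rw [ha, hb, ← hβz]; norm_num
      rw [hab', intervalIntegral.integral_same, ← hβz]
      all_goals norm_num
    · have hkpos : 0 < k := by
        rw [hk]
        have := Real.pi_pos
        positivity
      have hba : b - a = T0 * β / (1 + β) := by
        rw [ha, hb]; field_simp; ring
      have hkba : k * (b - a) = Real.pi := by
        rw [hk, hba]; field_simp
      have hcongr : ∫ t in a..b, g t
          = ∫ t in a..b, ((1 + β) / (2 * T0) + Real.cos (k * (t - a)) * ((1 + β) / (2 * T0))) := by
        rw [intervalIntegral.integral_of_le hab, intervalIntegral.integral_of_le hab]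
        apply setIntegral_congr_fun measurableSet_Ioc
        intro t ht
        have h1 : a < t := ht.1
        have habs : |t| = t := abs_of_pos (lt_of_le_of_lt ha0 h1)
        simp only [hg, habs, if_neg (not_le.2 h1), if_pos ht.2]
        ring
      rw [hcongr]
      have hcont : Continuous fun t : ℝ => Real.cos (k * (t - a)) * ((1 + β) / (2 * T0)) :=
        (Real.continuous_cos.comp (continuous_const.mul
          ((continuous_id).sub continuous_const))).mul continuous_const
      rw [intervalIntegral.integral_add intervalIntegrable_const
        (hcont.intervalIntegrable a b), intervalIntegral.integral_const,
        intervalIntegral.integral_mul_const]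
      have hder : ∀ t : ℝ, HasDerivAt (fun t => Real.sin (k * (t - a)) / k)
          (Real.cos (k * (t - a))) t := by
        intro t
        have h1 : HasDerivAt (fun t : ℝ => k * (t - a)) k t := by
          simpa using ((hasDerivAt_id t).sub_const a).const_mul k
        have h3 := ((Real.hasDerivAt_sin (k * (t - a))).comp t h1).div_const k
        simpa [mul_div_assoc, div_self hkpos.ne'] using h3
      have hcos : (∫ t in a..b, Real.cos (k * (t - a))) = 0 := by
        rw [intervalIntegral.integral_eq_sub_of_hasDerivAt (fun t _ => hder t)
          ((Real.continuous_cos.comp (continuous_const.mul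
            ((continuous_id).sub continuous_const))).intervalIntegrable a b)]
        rw [sub_self a, mul_zero, Real.sin_zero, hkba, Real.sin_pi]
        norm_num
      rw [hcos, zero_mul, add_zero, smul_eq_mul, hba]
      field_simp
  have hgeven : ∀ t : ℝ, g (-t) = g t := by
    intro t; simp only [hg, abs_neg]
  have hleft : ∫ t in (-b)..(-a), g t = β / 2 := by
    rw [← intervalIntegral.integral_comp_neg g]
    simp only [hgeven]
    exact hright
  rw [← intervalIntegral.integral_add_adjacent_intervals (hint (-b) (-a)) (hint (-a) b),
    ← intervalIntegral.integral_add_adjacent_intervals (hint (-a) a) (hint a b),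
    hleft, hmid, hright]
  ring
end

section
/- Let a > 0 and N > 0. For every x ∈ ℝ with |x| ≥ a/2 + N/(2a), the binary Gaussian mixture density dominates the centered Gaussian density: ½·exp(−(x−a)²/N) + ½·exp(−(x+a)²/N) ≥ exp(−x²/N). Equivalently, every root of the function f(x) = ½·exp(−(x−a)²/N) + ½·exp(−(x+a)²/N) − exp(−x²/N) has absolute value at most a/2 + N/(2a). -/
/-- For `|x| ≥ a/2 + N/(2a)`, the binary Gaussian mixture density dominates the centered
Gaussian density; equivalently, every root of their difference has absolute value at most
`a/2 + N/(2a)`. -/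
theorem mixture_dominates_gaussian (a N : ℝ) (ha : 0 < a) (hN : 0 < N) (x : ℝ)
    (hx : a / 2 + N / (2 * a) ≤ |x|) :
    Real.exp (-x ^ 2 / N) ≤
      (1 / 2) * Real.exp (-(x - a) ^ 2 / N) + (1 / 2) * Real.exp (-(x + a) ^ 2 / N) := by
  have hlog : (2:ℝ) ≤ Real.exp 1 := by
    have := Real.add_one_le_exp 1; linarith
  have main : ∀ y : ℝ, a / 2 + N / (2 * a) ≤ y →
      Real.exp (-y ^ 2 / N) ≤ (1 / 2) * Real.exp (-(y - a) ^ 2 / N) := by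
    intro y hy
    have h1 : a ^ 2 + N ≤ 2 * a * y := by
      have heq : a ^ 2 + N = 2 * a * (a / 2 + N / (2 * a)) := by
        field_simp
      rw [heq]
      exact mul_le_mul_of_nonneg_left hy (by positivity)
    have h2 : (1:ℝ) ≤ (2 * a * y - a ^ 2) / N := by
      rw [le_div_iff₀ hN]; linarith
    have h3 : -y ^ 2 / N + 1 ≤ -(y - a) ^ 2 / N := by
      have heq : -(y - a) ^ 2 / N = -y ^ 2 / N + (2 * a * y - a ^ 2) / N := by ring
      rw [heq]; linarith
    calc Real.exp (-y ^ 2 / N) = (1 / 2) * (2 * Real.exp (-y ^ 2 / N)) := by ring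
    _ ≤ (1 / 2) * Real.exp (-y ^ 2 / N + 1) := by
        rw [Real.exp_add]
        nlinarith [Real.exp_pos (-y ^ 2 / N), hlog]
    _ ≤ (1 / 2) * Real.exp (-(y - a) ^ 2 / N) := by
        gcongr
  rcases le_total 0 x with hx0 | hx0
  · rw [abs_of_nonneg hx0] at hx
    have h := main x hx
    have h2 := (Real.exp_pos (-(x + a) ^ 2 / N)).le
    nlinarith
  · rw [abs_of_nonpos hx0] at hx
    have h := main (-x) hx
    have e1 : (-x) ^ 2 = x ^ 2 := by ring
    have e2 : (-x - a) ^ 2 = (x + a) ^ 2 := by ring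
    rw [e1, e2] at h
    have h2 := (Real.exp_pos (-(x - a) ^ 2 / N)).le
    nlinarith
end
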